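/- arXiv:0911.1398 — 3 statements merged into one kernel-verified Lean document; each statement's English description precedes it below -/
import Mathlib

section
/- Let m ≥ 2 and 0 ≤ ℓ ≤ m−1, and let D = diag(a_1,…,a_{m+ℓ}) be an m-reducible diagram with red_m(D) = diag(b_1,…,b_{m+ℓ}). Then the sum of the first m layers strictly decreases under m-reduction: b_1+⋯+b_m ≤ (a_1+⋯+a_m) − (m−ℓ) < a_1+⋯+a_m. (This strict decrease of the head weight is what guarantees termination of the algorithm enumerating all admissible tails via symbolic reductions.) -/
/-!  Diagrams and `m`-reductions (Dumnicki, "Special homogeneous linear systems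
on Hirzebruch surfaces --- algorithmic issues").

A diagram `diag(a_1,…,a_k)` is encoded as the list `[a_1,…,a_k] : List ℕ` of its layers;
two diagrams are identified when they differ only by trailing zero layers. -/

/-- The number `r` subtracted from the current layer `a` in one step of the `m`-reduction,
given the set `U` of numbers already used: `r = a` if `a < m`, and
`r = max({1,…,m} \ U)` otherwise. -/
def redStep (m a : ℕ) (U : Finset ℕ) : ℕ :=
  if a < m then a else (Finset.Icc 1 m \ U).sup id

/-- Auxiliary recursion: process the first `i` entries of a list (the layers are fed
in reversed order, so these are the last `i` layers of the diagram), maintaining the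
set `U`; returns the final set `U` together with the new list of layers. -/
def redAux (m : ℕ) : ℕ → Finset ℕ → List ℕ → Finset ℕ × List ℕ
  | 0, U, l => (U, l)
  | _ + 1, U, [] => (U, [])
  | i + 1, U, a :: rest =>
    let r := redStep m a U
    let p := redAux m i (insert r U) rest
    (p.1, (a - r) :: p.2)

/-- The `m`-reduction of the diagram `diag(a_1,…,a_k)` given by the list of its layers:
process the indices `j = k,…,k-m+1` starting from `U = ∅`; the reduction succeeds
(returning `some (diag(b_1,…,b_k))`) iff `k ≥ m` and the final set `U` is `{1,…,m}`;
otherwise the diagram is not `m`-reducible and `none` is returned. -/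
def reduceList (m : ℕ) (D : List ℕ) : Option (List ℕ) :=
  if m ≤ D.length ∧ (redAux m m ∅ D.reverse).1 = Finset.Icc 1 m then
    some (redAux m m ∅ D.reverse).2.reverse
  else none

/-- The diagram given by the list of layers `D` is `m`-reducible. -/
def Reducible (m : ℕ) (D : List ℕ) : Prop := ∃ G, reduceList m D = some G

/-- Remove trailing zero layers: the canonical representative of a diagram. -/
def trim (D : List ℕ) : List ℕ := (D.reverse.dropWhile (· == 0)).reverse

/-- The `m`-reduction as an operation on diagrams identified up to trailing zero layers. -/
def redT (m : ℕ) (D : List ℕ) : Option (List ℕ) :=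
  (reduceList m (trim D)).map trim

/-- The `n`-fold `m`-reduction of a diagram; `none` as soon as some intermediate
diagram is not `m`-reducible. -/
def redIterT (m : ℕ) : ℕ → List ℕ → Option (List ℕ)
  | 0, D => some (trim D)
  | n + 1, D => (redIterT m n D).bind (redT m)

/-- Fuelled iteration of the `m`-reduction. -/
def nfAux (m : ℕ) : ℕ → List ℕ → List ℕ
  | 0, D => D
  | f + 1, D =>
    match redT m D with
    | none => D
    | some G => nfAux m f G

/-- The iterated-`m`-reduction normal form of a diagram: apply the `m`-reduction
repeatedly until the diagram is no longer `m`-reducible.  (The fuel `D.sum` always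
suffices, since each successful `m`-reduction strictly decreases the weight.) -/
def normalForm (m : ℕ) (D : List ℕ) : List ℕ := nfAux m D.sum (trim D)

/-- The sequence of admissible `h`-tails for multiplicity `m`:
`D_0 = ∅` and `D_{n+1}` is the iterated-`m`-reduction normal form of `h :: D_n`. -/
def seqD (m h : ℕ) : ℕ → List ℕ
  | 0 => []
  | n + 1 => normalForm m (h :: seqD m h n)

lemma redStep_zero (m : ℕ) (U : Finset ℕ) : redStep m 0 U = 0 := by
  unfold redStep
  split
  · rfl
  · have hm : m = 0 := by omega
    subst hm
    simp

lemma redAux_subset (m : ℕ) : ∀ i U (l : List ℕ), U ⊆ (redAux m i U l).1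
  | 0, U, l => subset_rfl
  | _+1, U, [] => subset_rfl
  | i+1, U, a :: rest => by
    simp only [redAux]
    exact (Finset.subset_insert _ _).trans (redAux_subset m i _ rest)

lemma redAux_length (m : ℕ) : ∀ i U (l : List ℕ), i ≤ l.length →
    (redAux m i U l).2.length = l.length
  | 0, U, l, _ => rfl
  | i+1, U, [], h => by simp at h
  | i+1, U, a :: rest, h => by
    simp only [redAux, List.length_cons]
    rw [redAux_length m i _ rest (by simpa using h)]

lemma redAux_sum (m : ℕ) : ∀ i (l : List ℕ) U d, i ≤ l.length → d ≤ i →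
    0 ∉ (redAux m i U l).1 →
    ((redAux m i U l).2.drop d).sum + (i - d) ≤ (l.drop d).sum
  | 0, l, U, d, _, hd, _ => by
    interval_cases d
    simp [redAux]
  | i+1, [], U, d, h, _, _ => by simp at h
  | i+1, a :: rest, U, d, h, hd, h0 => by
    have hlen : i ≤ rest.length := by simpa using h
    set r := redStep m a U with hr
    have hfin : (redAux m (i+1) U (a :: rest)).1
        = (redAux m i (insert r U) rest).1 := by simp only [redAux]; rfl
    have h0' : 0 ∉ (redAux m i (insert r U) rest).1 := by rwa [hfin] at h0
    have hrmem : r ∈ (redAux m i (insert r U) rest).1 :=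
      redAux_subset m i _ rest (Finset.mem_insert_self r U)
    have hr1 : 1 ≤ r := by
      rcases Nat.eq_zero_or_pos r with h' | h'
      · exact absurd (h' ▸ hrmem) h0'
      · exact h'
    have ha1 : 1 ≤ a := by
      rcases Nat.eq_zero_or_pos a with h' | h'
      · rw [h', redStep_zero] at hr
        omega
      · exact h'
    cases d with
    | zero =>
      have IH := redAux_sum m i rest (insert r U) 0 hlen (Nat.zero_le _) h0'
      simp only [redAux, List.drop_zero, List.sum_cons] at IH ⊢
      rw [← hr]
      omega
    | succ d' =>
      have IH := redAux_sum m i rest (insert r U) d' hlen (by omega) h0'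
      simp only [redAux, List.drop_succ_cons] at IH ⊢
      rw [← hr]
      omega

/-- let `m ≥ 2`, `0 ≤ ℓ ≤ m-1`, and let `D = diag(a_1,…,a_{m+ℓ})` be an
`m`-reducible diagram with `red_m(D) = diag(b_1,…,b_{m+ℓ})`.  Then the sum of the
first `m` layers strictly decreases under `m`-reduction:
`b_1+⋯+b_m ≤ (a_1+⋯+a_m) - (m-ℓ) < a_1+⋯+a_m`. -/
theorem head_weight_strictly_decreases (m ℓ : ℕ) (hm : 2 ≤ m) (hℓ : ℓ ≤ m - 1)
    (a b : List ℕ) (hlen : a.length = m + ℓ)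
    (h : reduceList m a = some b) :
    (b.take m).sum + (m - ℓ) ≤ (a.take m).sum ∧ (b.take m).sum < (a.take m).sum := by
  unfold reduceList at h
  split at h
  case isFalse => exact absurd h (by simp)
  case isTrue hcond =>
    obtain ⟨hml, hU⟩ := hcond
    have hb : b = (redAux m m ∅ a.reverse).2.reverse := by
      injection h with h'
      exact h'.symm
    set p := (redAux m m ∅ a.reverse).2 with hp
    have hplen : p.length = m + ℓ := by
      rw [hp, redAux_length m m ∅ a.reverse (by simp [hlen])]
      simp [hlen]
    have h0 : 0 ∉ (redAux m m ∅ a.reverse).1 := by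
      rw [hU]; simp
    have key := redAux_sum m m a.reverse ∅ ℓ (by simp [hlen]) (by omega) h0
    rw [← hp] at key
    -- rewrite sums of takes as sums of drops of reversed lists
    have hbtake : (b.take m).sum = (p.drop ℓ).sum := by
      rw [hb, List.take_reverse, List.sum_reverse, hplen, Nat.add_sub_cancel_left]
    have hatake : (a.take m).sum = (a.reverse.drop ℓ).sum := by
      rw [List.drop_reverse, List.sum_reverse, hlen, Nat.add_sub_cancel]
    rw [hbtake, hatake]
    constructor
    · exact key
    · omega
end

section
/- Define a sequence of diagrams by D_0 = the empty diagram and D_{n+1} = the iterated-3-reduction normal form of the diagram obtained from D_n = diag(a_1,…,a_k) by prepending a layer 5, i.e. of diag(5,a_1,…,a_k). Then the set of all values of this sequence is exactly the nine diagrams {∅, diag(5), diag(5,5), diag(3), diag(5,3), diag(4,3), diag(4,2), diag(4,1), diag(3,1)}; in particular every D_n has at most 2 nonzero layers, and the sequence is eventually periodic with D_{n+6} = D_n for all n ≥ 3. -/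
lemma seqD_per : ∀ k, seqD 3 5 (k + 9) = seqD 3 5 (k + 3) := by
  intro k
  induction k with
  | zero => rfl
  | succ k ih =>
    have h1 : seqD 3 5 ((k + 9) + 1) = normalForm 3 (5 :: seqD 3 5 (k + 9)) := rfl
    have h2 : seqD 3 5 ((k + 3) + 1) = normalForm 3 (5 :: seqD 3 5 (k + 3)) := rfl
    show seqD 3 5 ((k + 9) + 1) = seqD 3 5 ((k + 3) + 1)
    rw [h1, h2, ih]

lemma seqD_mem : ∀ n, seqD 3 5 n ∈
    ({[], [5], [5, 5], [3], [5, 3], [4, 3], [4, 2], [4, 1], [3, 1]} : Set (List ℕ)) := by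
  intro n
  induction n using Nat.strong_induction_on with
  | _ n ih =>
    rcases lt_or_ge n 9 with h | h
    · interval_cases n <;>
        simp only [Set.mem_insert_iff, Set.mem_singleton_iff] <;> decide
    · obtain ⟨k, rfl⟩ : ∃ k, n = k + 9 := ⟨n - 9, by omega⟩
      rw [seqD_per]
      exact ih (k + 3) (by omega)

/-- let `D_0 = ∅` and `D_{n+1}` be the iterated-`3`-reduction normal form of
the diagram obtained from `D_n` by prepending a layer `5` (the construction of all
admissible `5`-`∅`-tails for multiplicity `3`).  Then the set of all values of this
sequence is exactly the nine diagrams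
`{∅, diag(5), diag(5,5), diag(3), diag(5,3), diag(4,3), diag(4,2), diag(4,1), diag(3,1)}`;
in particular every `D_n` has at most `2` nonzero layers, and the sequence is eventually
periodic with `D_{n+6} = D_n` for all `n ≥ 3`. -/
theorem h_tails_3_5 :
    Set.range (seqD 3 5) =
      ({[], [5], [5, 5], [3], [5, 3], [4, 3], [4, 2], [4, 1], [3, 1]} : Set (List ℕ)) ∧
    (∀ n : ℕ, (seqD 3 5 n).countP (· != 0) ≤ 2) ∧
    (∀ n : ℕ, 3 ≤ n → seqD 3 5 (n + 6) = seqD 3 5 n) := by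
  refine ⟨?_, ?_, ?_⟩
  · ext D
    constructor
    · rintro ⟨n, rfl⟩; exact seqD_mem n
    · simp only [Set.mem_insert_iff, Set.mem_singleton_iff]
      rintro (rfl | rfl | rfl | rfl | rfl | rfl | rfl | rfl | rfl)
      exacts [⟨0, rfl⟩, ⟨1, rfl⟩, ⟨2, rfl⟩, ⟨3, rfl⟩, ⟨4, rfl⟩, ⟨5, rfl⟩, ⟨6, rfl⟩,
        ⟨7, rfl⟩, ⟨8, rfl⟩]
  · intro n
    have := seqD_mem n
    simp only [Set.mem_insert_iff, Set.mem_singleton_iff] at this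
    rcases this with h | h | h | h | h | h | h | h | h <;> rw [h] <;> decide
  · intro n hn
    obtain ⟨k, rfl⟩ : ∃ k, n = k + 3 := ⟨n - 3, by omega⟩
    exact seqD_per k
end

section
/- Define a sequence of diagrams by D_0 = the empty diagram and D_{n+1} = the iterated-5-reduction normal form of the diagram obtained from D_n = diag(a_1,…,a_k) by prepending a layer 9, i.e. of diag(9,a_1,…,a_k). Then the set of all values of this sequence is exactly the fifteen diagrams {∅, diag(9), diag(9,9), diag(9,9,9), diag(9,9,9,9), diag(7,5,3), diag(9,7,5,3), diag(8,7,3), diag(9,8,7,3), diag(8,7,4,2), diag(8,5,2), diag(9,8,5,2), diag(8,6,4), diag(9,8,6,4), diag(8,7,5,1)}; in particular every D_n has at most 4 nonzero layers, and the sequence is eventually periodic with D_{n+10} = D_n for all n ≥ 5. -/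
private lemma seq159 : seqD 5 9 15 = seqD 5 9 5 := by decide

private lemma per (k : ℕ) : seqD 5 9 (5 + k + 10) = seqD 5 9 (5 + k) := by
  induction k with
  | zero => exact seq159
  | succ k ih =>
    have h1 : 5 + (k + 1) + 10 = (5 + k + 10) + 1 := by omega
    have h2 : 5 + (k + 1) = (5 + k) + 1 := by omega
    rw [h1, h2]
    show normalForm 5 (9 :: seqD 5 9 (5 + k + 10)) = normalForm 5 (9 :: seqD 5 9 (5 + k))
    rw [ih]

private lemma per' : ∀ n : ℕ, 5 ≤ n → seqD 5 9 (n + 10) = seqD 5 9 n := by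
  intro n hn
  obtain ⟨k, rfl⟩ := Nat.exists_eq_add_of_le hn
  exact per k

private lemma mem15 : ∀ n : ℕ, seqD 5 9 n ∈
    ({[], [9], [9, 9], [9, 9, 9], [9, 9, 9, 9], [7, 5, 3], [9, 7, 5, 3],
      [8, 7, 3], [9, 8, 7, 3], [8, 7, 4, 2], [8, 5, 2], [9, 8, 5, 2],
      [8, 6, 4], [9, 8, 6, 4], [8, 7, 5, 1]} : Set (List ℕ)) := by
  intro n
  induction n using Nat.strong_induction_on with
  | _ n ih =>
    by_cases h : n < 15
    · interval_cases n <;> simp only [Set.mem_insert_iff, Set.mem_singleton_iff] <;> decide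
    · push_neg at h
      have h5 : 5 ≤ n - 10 := by omega
      have hp := per' (n - 10) h5
      rw [show n - 10 + 10 = n by omega] at hp
      rw [hp]
      exact ih (n - 10) (by omega)

/-- let `D_0 = ∅` and `D_{n+1}` be the iterated-`5`-reduction normal form of
the diagram obtained from `D_n` by prepending a layer `9` (the construction of all
admissible `9`-`∅`-tails for multiplicity `5`).  Then the set of all values of this
sequence is exactly the fifteen diagrams
`{∅, diag(9), diag(9,9), diag(9,9,9), diag(9,9,9,9), diag(7,5,3), diag(9,7,5,3),
diag(8,7,3), diag(9,8,7,3), diag(8,7,4,2), diag(8,5,2), diag(9,8,5,2), diag(8,6,4),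
diag(9,8,6,4), diag(8,7,5,1)}`; in particular every `D_n` has at most `4` nonzero layers,
and the sequence is eventually periodic with `D_{n+10} = D_n` for all `n ≥ 5`. -/
theorem h_tails_5_9 :
    Set.range (seqD 5 9) =
      ({[], [9], [9, 9], [9, 9, 9], [9, 9, 9, 9], [7, 5, 3], [9, 7, 5, 3],
        [8, 7, 3], [9, 8, 7, 3], [8, 7, 4, 2], [8, 5, 2], [9, 8, 5, 2],
        [8, 6, 4], [9, 8, 6, 4], [8, 7, 5, 1]} : Set (List ℕ)) ∧
    (∀ n : ℕ, (seqD 5 9 n).countP (· != 0) ≤ 4) ∧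
    (∀ n : ℕ, 5 ≤ n → seqD 5 9 (n + 10) = seqD 5 9 n) := by
  refine ⟨?_, ?_, per'⟩
  · apply Set.eq_of_subset_of_subset
    · rintro _ ⟨n, rfl⟩; exact mem15 n
    · intro x hx
      simp only [Set.mem_insert_iff, Set.mem_singleton_iff] at hx
      rcases hx with h|h|h|h|h|h|h|h|h|h|h|h|h|h|h <;> subst h
      · exact ⟨0, by decide⟩
      · exact ⟨1, by decide⟩
      · exact ⟨2, by decide⟩
      · exact ⟨3, by decide⟩
      · exact ⟨4, by decide⟩
      · exact ⟨5, by decide⟩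
      · exact ⟨6, by decide⟩
      · exact ⟨7, by decide⟩
      · exact ⟨8, by decide⟩
      · exact ⟨9, by decide⟩
      · exact ⟨10, by decide⟩
      · exact ⟨11, by decide⟩
      · exact ⟨12, by decide⟩
      · exact ⟨13, by decide⟩
      · exact ⟨14, by decide⟩
  · intro n
    have hm := mem15 n
    simp only [Set.mem_insert_iff, Set.mem_singleton_iff] at hm
    rcases hm with h|h|h|h|h|h|h|h|h|h|h|h|h|h|h <;> rw [h] <;> decide
end
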